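/- arXiv:1008.2907 — 4 statements merged into one kernel-verified Lean document; each statement's English description precedes it below -/
import Mathlib

section
/- Let H = ℓ²(ℤ) with standard orthonormal basis {e_b}_{b∈ℤ}. Then there exist a unitary operator U on H which is weakly stable (i.e. Uⁿ → 0 in the weak operator topology as n → ∞) and a bounded linear operator A on H such that the Cesàro means (1/N) ∑_{n=1}^N Uⁿ A Uⁿ do not converge in the weak operator topology as N → ∞. -/
open Filter Topology

noncomputable section

/-- The Hilbert space `ℓ²(ℤ)` of square-summable two-sided complex sequences. -/
abbrev H : Type := lp (fun _ : ℤ => ℂ) 2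

namespace Cex

/-- underlying function of the weighted composition operator -/
def cf (c : ℤ → ℂ) (σ : ℤ ≃ ℤ) (f : H) : ∀ _ : ℤ, ℂ := fun k => c k * f (σ k)

lemma memℓp_cf (c : ℤ → ℂ) (hc : ∀ k, ‖c k‖ ≤ 1) (σ : ℤ ≃ ℤ) (f : H) :
    Memℓp (cf c σ f) 2 := by
  apply memℓp_gen
  have h1 : Summable (fun k : ℤ => ‖f k‖ ^ (2 : ENNReal).toReal) :=
    (lp.memℓp f).summable (by norm_num)
  have h2 : Summable (fun k : ℤ => ‖f (σ k)‖ ^ (2 : ENNReal).toReal) := by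
    exact σ.summable_iff.2 h1
  refine Summable.of_nonneg_of_le (fun k => by positivity) (fun k => ?_) h2
  have : ‖cf c σ f k‖ ≤ ‖f (σ k)‖ := by
    rw [cf, norm_mul]
    calc ‖c k‖ * ‖f (σ k)‖ ≤ 1 * ‖f (σ k)‖ := by
          exact mul_le_mul_of_nonneg_right (hc k) (norm_nonneg _)
      _ = ‖f (σ k)‖ := one_mul _
  exact Real.rpow_le_rpow (norm_nonneg _) this (by norm_num)

lemma norm_cf_le (c : ℤ → ℂ) (hc : ∀ k, ‖c k‖ ≤ 1) (σ : ℤ ≃ ℤ) (f : H) :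
    ‖(⟨cf c σ f, memℓp_cf c hc σ f⟩ : H)‖ ≤ ‖f‖ := by
  apply lp.norm_le_of_tsum_le (by norm_num) (norm_nonneg _)
  have h2 : ∑' k : ℤ, ‖f (σ k)‖ ^ (2 : ENNReal).toReal
      = ∑' k : ℤ, ‖f k‖ ^ (2 : ENNReal).toReal :=
    Equiv.tsum_eq σ (fun k => ‖f k‖ ^ (2 : ENNReal).toReal)
  calc ∑' k : ℤ, ‖(⟨cf c σ f, memℓp_cf c hc σ f⟩ : H) k‖ ^ (2 : ENNReal).toReal
      ≤ ∑' k : ℤ, ‖f (σ k)‖ ^ (2 : ENNReal).toReal := by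
        apply Summable.tsum_le_tsum _ ((memℓp_cf c hc σ f).summable (by norm_num))
          (σ.summable_iff.2 ((lp.memℓp f).summable (by norm_num)))
        intro k
        apply Real.rpow_le_rpow (norm_nonneg _) _ (by norm_num)
        show ‖c k * f (σ k)‖ ≤ _
        rw [norm_mul]
        calc ‖c k‖ * ‖f (σ k)‖ ≤ 1 * ‖f (σ k)‖ :=
              mul_le_mul_of_nonneg_right (hc k) (norm_nonneg _)
          _ = ‖f (σ k)‖ := one_mul _
    _ = ∑' k : ℤ, ‖f k‖ ^ (2 : ENNReal).toReal := h2
    _ = ‖f‖ ^ (2 : ENNReal).toReal := (lp.norm_rpow_eq_tsum (by norm_num) f).symm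

/-- the weighted composition operator -/
def T (c : ℤ → ℂ) (hc : ∀ k, ‖c k‖ ≤ 1) (σ : ℤ ≃ ℤ) : H →L[ℂ] H :=
  LinearMap.mkContinuous
    { toFun := fun f => (⟨cf c σ f, memℓp_cf c hc σ f⟩ : H)
      map_add' := by
        intro f g
        apply lp.ext
        funext k
        show c k * (f + g) (σ k) = (⟨cf c σ f, _⟩ : H) k + (⟨cf c σ g, _⟩ : H) k
        rw [lp.coeFn_add]
        show c k * (f (σ k) + g (σ k)) = c k * f (σ k) + c k * g (σ k)
        ring
      map_smul' := by
        intro r f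
        apply lp.ext
        funext k
        show c k * (r • f) (σ k) = (r • (⟨cf c σ f, _⟩ : H) : H) k
        rw [lp.coeFn_smul, lp.coeFn_smul]
        show c k * (r • f (σ k)) = r • (c k * f (σ k))
        simp [smul_eq_mul]; ring }
    1 (fun f => by simpa using norm_cf_le c hc σ f)

lemma T_apply (c : ℤ → ℂ) (hc : ∀ k, ‖c k‖ ≤ 1) (σ : ℤ ≃ ℤ) (f : H) (k : ℤ) :
    (T c hc σ f) k = c k * f (σ k) := rfl

lemma T_norm_le (c : ℤ → ℂ) (hc : ∀ k, ‖c k‖ ≤ 1) (σ : ℤ ≃ ℤ) (f : H) :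
    ‖T c hc σ f‖ ≤ ‖f‖ := norm_cf_le c hc σ f

lemma T_single (c : ℤ → ℂ) (hc : ∀ k, ‖c k‖ ≤ 1) (σ : ℤ ≃ ℤ) (b : ℤ) (v : ℂ) :
    T c hc σ (lp.single 2 b v) = lp.single 2 (σ.symm b) (c (σ.symm b) * v) := by
  apply lp.ext
  funext k
  rw [T_apply]
  by_cases h : k = σ.symm b
  · subst h
    rw [σ.apply_symm_apply, lp.single_apply_self, lp.single_apply_self]
  · rw [lp.single_apply_ne _ _ _ h, lp.single_apply_ne, mul_zero]
    intro hσ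
    exact h (by rw [← hσ, σ.symm_apply_apply])


def U : H →L[ℂ] H := T (fun _ => 1) (fun _ => by norm_num) (Equiv.subRight 1)

def V : H →L[ℂ] H := T (fun _ => 1) (fun _ => by norm_num) (Equiv.addRight 1)

lemma VU (f : H) : V (U f) = f := by
  apply lp.ext; funext k
  show (1:ℂ) * ((1:ℂ) * f (k + 1 - 1)) = f k
  simp

lemma UV (f : H) : U (V f) = f := by
  apply lp.ext; funext k
  show (1:ℂ) * ((1:ℂ) * f (k - 1 + 1)) = f k
  simp

lemma U_norm (x : H) : ‖U x‖ = ‖x‖ := by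
  refine le_antisymm (T_norm_le _ _ _ x) ?_
  conv_lhs => rw [← VU x]
  exact T_norm_le _ _ _ (U x)

lemma U_surj : Function.Surjective U := fun g => ⟨V g, UV g⟩

lemma Upow_norm (n : ℕ) (x : H) : ‖(U ^ n) x‖ = ‖x‖ := by
  induction n generalizing x with
  | zero => simp
  | succ n ih =>
      rw [pow_succ, ContinuousLinearMap.mul_apply, ih, U_norm]

lemma U_single (b : ℤ) (v : ℂ) : U (lp.single 2 b v) = lp.single 2 (b + 1) v := by
  rw [U, T_single]
  norm_num

lemma Upow_single (n : ℕ) (b : ℤ) (v : ℂ) :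
    (U ^ n) (lp.single 2 b v) = lp.single 2 (b + n) v := by
  induction n generalizing b with
  | zero => simp
  | succ n ih =>
      rw [pow_succ, ContinuousLinearMap.mul_apply, U_single, ih]
      congr 1
      push_cast
      ring

lemma coord_tendsto (y : H) (b : ℤ) :
    Tendsto (fun n : ℕ => y (b + n)) atTop (nhds 0) := by
  have hsq : Tendsto (fun k : ℤ => ‖y k‖ ^ (2 : ENNReal).toReal) cofinite (nhds 0) :=
    ((lp.memℓp y).summable (by norm_num)).tendsto_cofinite_zero
  have hinj : Function.Injective (fun n : ℕ => b + (n : ℤ)) := by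
    intro m n h
    simpa using h
  have hmap : Tendsto (fun n : ℕ => b + (n : ℤ)) atTop cofinite := by
    rw [← Nat.cofinite_eq_atTop]
    exact hinj.tendsto_cofinite
  have h1 : Tendsto (fun n : ℕ => ‖y (b + n)‖ ^ (2 : ENNReal).toReal) atTop (nhds 0) :=
    hsq.comp hmap
  have h2 : Tendsto (fun n : ℕ => ‖y (b + n)‖) atTop (nhds 0) := by
    have h3 := h1.sqrt
    simp only [Real.sqrt_zero] at h3
    convert h3 using 2 with n
    rw [show (2 : ENNReal).toReal = ((2 : ℕ) : ℝ) by norm_num, Real.rpow_natCast,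
      Real.sqrt_sq (norm_nonneg _)]
  exact tendsto_zero_iff_norm_tendsto_zero.mpr h2

lemma weak_stable (x y : H) :
    Tendsto (fun n : ℕ => (inner ℂ ((U ^ n) x) y : ℂ)) atTop (nhds 0) := by
  rw [NormedAddCommGroup.tendsto_nhds_zero]
  intro ε hε
  have hδ : 0 < ε / (2 * (‖y‖ + 1)) := by positivity
  obtain ⟨s, hs⟩ : ∃ s : Finset ℤ, ‖x - ∑ b ∈ s, lp.single 2 b (x b)‖ < ε / (2 * (‖y‖ + 1)) := by
    have h := Metric.tendsto_nhds.mp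
      (lp.hasSum_single (by norm_num : (2 : ENNReal) ≠ ⊤) x) _ hδ
    obtain ⟨s, hs⟩ := h.exists
    exact ⟨s, by rwa [dist_comm, dist_eq_norm] at hs⟩
  set xs : H := ∑ b ∈ s, lp.single 2 b (x b) with hxs
  have hinner_s : ∀ n : ℕ, (inner ℂ ((U ^ n) xs) y : ℂ)
      = ∑ b ∈ s, (starRingEnd ℂ) (x b) * y (b + n) := by
    intro n
    rw [hxs, map_sum, sum_inner]
    refine Finset.sum_congr rfl fun b _ => ?_
    rw [Upow_single, lp.inner_single_left]
    exact RCLike.inner_apply' _ _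
  have htend : Tendsto (fun n : ℕ => (inner ℂ ((U ^ n) xs) y : ℂ)) atTop (nhds 0) := by
    simp only [hinner_s]
    have : Tendsto (fun n : ℕ => ∑ b ∈ s, (starRingEnd ℂ) (x b) * y (b + n)) atTop
        (nhds (∑ b ∈ s, (starRingEnd ℂ) (x b) * 0)) := by
      refine tendsto_finset_sum _ fun b _ => ?_
      exact (coord_tendsto y b).const_mul _
    simpa using this
  have hev := (NormedAddCommGroup.tendsto_nhds_zero.mp htend) (ε / 2) (by positivity)
  filter_upwards [hev] with n hn
  have hsplit : (inner ℂ ((U ^ n) x) y : ℂ)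
      = inner ℂ ((U ^ n) (x - xs)) y + inner ℂ ((U ^ n) xs) y := by
    rw [map_sub, inner_sub_left]
    ring
  rw [hsplit]
  calc ‖(inner ℂ ((U ^ n) (x - xs)) y : ℂ) + inner ℂ ((U ^ n) xs) y‖
      ≤ ‖(inner ℂ ((U ^ n) (x - xs)) y : ℂ)‖ + ‖(inner ℂ ((U ^ n) xs) y : ℂ)‖ := norm_add_le _ _
    _ ≤ ‖(U ^ n) (x - xs)‖ * ‖y‖ + ‖(inner ℂ ((U ^ n) xs) y : ℂ)‖ := by
        gcongr; exact norm_inner_le_norm _ _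
    _ < ε / (2 * (‖y‖ + 1)) * ‖y‖ + ε / 2 := by
        apply add_lt_add_of_le_of_lt _ hn
        rw [Upow_norm]
        have h1 : ε / (2 * (‖y‖ + 1)) * ‖y‖ ≤ ε / (2 * (‖y‖ + 1)) * (‖y‖ + 1) := by
          apply mul_le_mul_of_nonneg_left (by linarith) hδ.le
        calc ‖x - xs‖ * ‖y‖ ≤ (ε / (2 * (‖y‖ + 1))) * ‖y‖ :=
              mul_le_mul_of_nonneg_right hs.le (norm_nonneg _)
          _ ≤ _ := le_refl _
    _ ≤ ε / 2 + ε / 2 := by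
        apply add_le_add_left
        rw [div_mul_eq_mul_div, div_le_div_iff₀ (by positivity) (by norm_num)]
        ring_nf
        nlinarith [norm_nonneg y, hε]
    _ = ε := by ring

/-- indicator of `n` with `Nat.log 2 n` even -/
def aN (n : ℕ) : ℕ := if Even (Nat.log 2 n) then 1 else 0

def cA : ℤ → ℂ := fun k => (aN (-k).toNat : ℂ)

lemma cA_norm (k : ℤ) : ‖cA k‖ ≤ 1 := by
  rw [cA, aN]; split <;> simp

def A : H →L[ℂ] H := T cA cA_norm (Equiv.neg ℤ)

def e0 : H := lp.single 2 0 1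

lemma A_single (n : ℤ) (v : ℂ) : A (lp.single 2 n v) = lp.single 2 (-n) (cA (-n) * v) := by
  rw [A, T_single]
  norm_num

lemma cesaro_term (n : ℕ) :
    (inner ℂ ((U ^ n * A * U ^ n) e0) e0 : ℂ) = (aN n : ℂ) := by
  rw [ContinuousLinearMap.mul_apply, ContinuousLinearMap.mul_apply, e0, Upow_single, zero_add,
    A_single, Upow_single, neg_add_cancel, lp.inner_single_left]
  rw [RCLike.inner_apply, lp.single_apply_self, cA]
  simp

def cnt (N : ℕ) : ℕ := ((Finset.Icc 1 N).filter (fun n => Even (Nat.log 2 n))).card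

lemma cesaro_eq (N : ℕ) :
    (inner ℂ (((N : ℂ)⁻¹ • ∑ n ∈ Finset.Icc 1 N, U ^ n * A * U ^ n) e0) e0 : ℂ)
      = (N : ℂ)⁻¹ * (cnt N : ℂ) := by
  rw [ContinuousLinearMap.smul_apply, inner_smul_left, ContinuousLinearMap.sum_apply, sum_inner]
  have h1 : ∑ n ∈ Finset.Icc 1 N, (inner ℂ ((U ^ n * A * U ^ n) e0) e0 : ℂ) = (cnt N : ℂ) := by
    rw [Finset.sum_congr rfl (fun n _ => cesaro_term n)]
    rw [cnt]
    rw [Finset.card_filter]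
    push_cast [aN]
    rfl
  rw [h1]
  congr 1
  simp

lemma cnt_step (m : ℕ) :
    cnt (2 ^ (m + 1) - 1) = cnt (2 ^ m - 1) + (if Even m then 2 ^ m else 0) := by
  have h1 : (1 : ℕ) ≤ 2 ^ m := Nat.one_le_two_pow
  have h1' : (1 : ℕ) ≤ 2 ^ (m + 1) := Nat.one_le_two_pow
  have hIcc : ∀ j : ℕ, 1 ≤ 2 ^ j → Finset.Icc 1 (2 ^ j - 1) = Finset.Ico 1 (2 ^ j) := by
    intro j hj
    rw [← Finset.Ico_add_one_right_eq_Icc]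
    congr 1
    omega
  rw [cnt, cnt, hIcc _ h1', hIcc _ h1,
    ← Finset.Ico_union_Ico_eq_Ico h1 (Nat.pow_le_pow_right (by norm_num) (Nat.le_succ m)),
    Finset.filter_union, Finset.card_union_of_disjoint]
  · congr 1
    have hlog : ∀ n ∈ Finset.Ico (2 ^ m) (2 ^ (m + 1)), Nat.log 2 n = m := by
      intro n hn
      rw [Finset.mem_Ico] at hn
      exact Nat.log_eq_of_pow_le_of_lt_pow hn.1 hn.2
    by_cases hm : Even m
    · rw [if_pos hm, Finset.filter_true_of_mem, Nat.card_Ico]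
      · have : 2 ^ (m + 1) = 2 * 2 ^ m := by ring
        omega
      · intro n hn
        rw [hlog n hn]
        exact hm
    · rw [if_neg hm, Finset.filter_false_of_mem, Finset.card_empty]
      intro n hn
      rw [hlog n hn]
      exact hm
  · apply Finset.disjoint_filter_filter
    exact Finset.Ico_disjoint_Ico_consecutive 1 (2 ^ m) (2 ^ (m + 1))

lemma cnt_formula (m : ℕ) :
    3 * cnt (2 ^ m - 1) = if Even m then 2 ^ m - 1 else 2 ^ (m + 1) - 1 := by
  induction m with
  | zero => simp [cnt]
  | succ m ih =>
      rw [cnt_step, Nat.mul_add, ih]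
      have h1 : (1 : ℕ) ≤ 2 ^ m := Nat.one_le_two_pow
      have h2 : 2 ^ (m + 1) = 2 * 2 ^ m := by ring
      have h3 : 2 ^ (m + 2) = 4 * 2 ^ m := by ring
      by_cases hm : Even m
      · rw [if_pos hm, if_pos hm, if_neg (by simpa [Nat.even_add_one] using hm)]
        omega
      · rw [if_neg hm, if_neg hm, if_pos (by simpa [Nat.even_add_one] using hm)]
        omega

end Cex

open Cex

/-- There exist a weakly stable unitary operator `U` on `ℓ²(ℤ)` and a bounded operator `A`
such that the Cesàro means `(1/N) ∑_{n=1}^N Uⁿ A Uⁿ` do not converge in the weak operator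
topology. -/
theorem exists_weaklyStable_unitary_cesaro_not_weakly_convergent :
    ∃ U A : H →L[ℂ] H,
      -- `U` is unitary: a surjective linear isometry
      (∀ x : H, ‖U x‖ = ‖x‖) ∧ Function.Surjective U ∧
      -- `U` is weakly stable: `Uⁿ → 0` in the weak operator topology
      (∀ x y : H, Tendsto (fun n : ℕ => (inner ℂ ((U ^ n) x) y : ℂ)) atTop (nhds 0)) ∧
      -- the Cesàro means `(1/N) ∑_{n=1}^N Uⁿ A Uⁿ` do not converge in the weak operator topology
      ¬ (∀ x y : H, ∃ c : ℂ,
          Tendsto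
            (fun N : ℕ =>
              (inner ℂ (((N : ℂ)⁻¹ • ∑ n ∈ Finset.Icc 1 N, U ^ n * A * U ^ n) x) y : ℂ))
            atTop (nhds c)) := by
  refine ⟨U, A, U_norm, U_surj, weak_stable, ?_⟩
  intro hyp
  obtain ⟨c, hc⟩ := hyp e0 e0
  simp only [cesaro_eq] at hc
  set φ : ℕ → ℂ := fun N => (N : ℂ)⁻¹ * (cnt N : ℂ) with hφ
  have hmono : ∀ a b : ℕ, a < b → (2 : ℕ) ^ a - 1 < 2 ^ b - 1 := by
    intro a b h
    have h1 := Nat.pow_lt_pow_right (by norm_num : 1 < 2) h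
    have h2 : (1 : ℕ) ≤ 2 ^ a := Nat.one_le_two_pow
    omega
  -- even subsequence is eventually constantly 1/3
  have heven : ∀ k : ℕ, 1 ≤ k → φ (2 ^ (2 * k) - 1) = 1 / 3 := by
    intro k hk
    have h3 := cnt_formula (2 * k)
    rw [if_pos (even_two_mul k)] at h3
    have hN : 4 ≤ 2 ^ (2 * k) := by
      calc (4 : ℕ) = 2 ^ 2 := by norm_num
        _ ≤ 2 ^ (2 * k) := Nat.pow_le_pow_right (by norm_num) (by omega)
    have hNc : ((2 ^ (2 * k) - 1 : ℕ) : ℂ) ≠ 0 := Nat.cast_ne_zero.2 (by omega)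
    have h3' : (3 : ℂ) * ((cnt (2 ^ (2 * k) - 1) : ℕ) : ℂ) = ((2 ^ (2 * k) - 1 : ℕ) : ℂ) := by
      exact_mod_cast congrArg (Nat.cast : ℕ → ℂ) h3
    have hcnt : ((cnt (2 ^ (2 * k) - 1) : ℕ) : ℂ) = ((2 ^ (2 * k) - 1 : ℕ) : ℂ) / 3 := by
      rw [eq_div_iff (by norm_num : (3 : ℂ) ≠ 0)]
      linear_combination h3'
    rw [hφ]
    dsimp only
    rw [hcnt, mul_div_assoc', inv_mul_cancel₀ hNc]
  have hu : Tendsto (fun k : ℕ => 2 ^ (2 * k) - 1) atTop atTop := by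
    apply StrictMono.tendsto_atTop
    intro a b h
    exact hmono _ _ (by omega)
  have hv : Tendsto (fun k : ℕ => 2 ^ (2 * k + 1) - 1) atTop atTop := by
    apply StrictMono.tendsto_atTop
    intro a b h
    exact hmono _ _ (by omega)
  have hc13 : c = 1 / 3 := by
    refine tendsto_nhds_unique (hc.comp hu) ?_
    apply Tendsto.congr' _ (tendsto_const_nhds : Tendsto (fun _ : ℕ => (1 / 3 : ℂ)) atTop _)
    filter_upwards [eventually_ge_atTop 1] with k hk
    exact (heven k hk).symm
  subst hc13
  have hodd := hc.comp hv
  obtain ⟨k, hk⟩ := (Metric.tendsto_nhds.mp hodd (1 / 3) (by norm_num)).exists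
  simp only [Function.comp] at hk
  -- compute the odd subsequence value
  set m : ℕ := 2 * k + 1 with hm
  have hmodd : ¬ Even m := by simp [hm, Nat.even_add_one, parity_simps]
  have h3 := cnt_formula m
  rw [if_neg hmodd] at h3
  set n : ℕ := 2 ^ m with hn
  have hn2 : 2 ≤ n := by
    rw [hn]
    calc (2 : ℕ) = 2 ^ 1 := by norm_num
    _ ≤ 2 ^ m := Nat.pow_le_pow_right (by norm_num) (by omega)
  have h2n : 2 ^ (m + 1) = 2 * n := by rw [hn]; ring
  rw [h2n] at h3
  -- cast facts
  have hcast1 : ((n - 1 : ℕ) : ℂ) = (n : ℂ) - 1 := by push_cast [Nat.cast_sub (by omega : 1 ≤ n)]; ring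
  have hcast2 : (3 : ℂ) * ((cnt (n - 1) : ℕ) : ℂ) = 2 * (n : ℂ) - 1 := by
    have h := congrArg (Nat.cast : ℕ → ℂ) h3
    push_cast [Nat.cast_sub (by omega : 1 ≤ 2 * n)] at h
    linear_combination h
  have hne : ((n : ℂ) - 1) ≠ 0 := by
    rw [← hcast1]
    exact Nat.cast_ne_zero.2 (by omega)
  have hcnt : ((cnt (n - 1) : ℕ) : ℂ) = (2 * (n : ℂ) - 1) / 3 := by
    rw [eq_div_iff (by norm_num : (3 : ℂ) ≠ 0)]
    linear_combination hcast2
  have hval : φ (n - 1) - 1 / 3 = (n : ℂ) / (3 * ((n : ℂ) - 1)) := by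
    rw [hφ]
    dsimp only
    rw [hcast1, hcnt]
    field_simp
    ring
  have hdist : (1 / 3 : ℝ) ≤ dist (φ (n - 1)) (1 / 3 : ℂ) := by
    rw [dist_eq_norm, hval, norm_div, norm_mul]
    have e1 : ‖(n : ℂ)‖ = (n : ℝ) := by
      simp
    have e2 : ‖(n : ℂ) - 1‖ = ((n - 1 : ℕ) : ℝ) := by
      rw [← hcast1]
      simp
    have e3 : ‖(3 : ℂ)‖ = (3 : ℝ) := by simp
    rw [e1, e2, e3]
    have hr : (1 : ℝ) ≤ ((n - 1 : ℕ) : ℝ) := by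
      exact_mod_cast Nat.one_le_iff_ne_zero.2 (by omega)
    have hnn : ((n : ℕ) : ℝ) = ((n - 1 : ℕ) : ℝ) + 1 := by
      push_cast [Nat.cast_sub (by omega : 1 ≤ n)]
      ring
    rw [le_div_iff₀ (by positivity)]
    rw [hnn]
    linarith
  exact absurd hk (not_lt.2 hdist)

end
end

section
/- Let H = ℓ²(ℤ) with standard orthonormal basis {e_b}_{b∈ℤ}, let U be the left shift operator (U e_b = e_{b-1}), and let f : ℕ⁺ → {0,1} be a sequence whose Cesàro means (1/N) ∑_{n=1}^N f(n) do not converge. Define A by A e_b = e_{f(−b)−b} for b < 0 and A e_b = e_b for b ≥ 0. Then A is a bounded operator, ⟨Uⁿ A Uⁿ e₀, e₀⟩ = 1 − f(n) for every n ≥ 1, and consequently the Cesàro means (1/N) ∑_{n=1}^N Uⁿ A Uⁿ do not converge in the weak operator topology. -/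
open Filter Topology
open scoped ENNReal

noncomputable section

/-- The standard orthonormal basis vector `e_b` of `ℓ²(ℤ)`. -/
noncomputable def e (b : ℤ) : H := lp.single 2 b (1 : ℂ)

namespace LeftShiftAux

lemma e_apply (b j : ℤ) : (e b : ∀ _ : ℤ, ℂ) j = if j = b then 1 else 0 := by
  by_cases h : j = b
  · subst h
    rw [if_pos rfl]
    exact lp.single_apply_self 2 j 1
  · rw [if_neg h]
    exact lp.single_apply_ne 2 b 1 h

variable (σ : ℤ → ℤ) (c : ℤ → Prop) [DecidablePred c]

/-- The underlying function of the "partial composition" operator. -/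
def F (x : H) : ∀ _ : ℤ, ℂ := fun k => if c k then x (σ k) else 0

lemma memF (hσ : Function.Injective σ) (x : H) : Memℓp (F σ c x) 2 := by
  apply memℓp_gen
  have hx : Summable fun j : ℤ => ‖x j‖ ^ (2 : ℝ≥0∞).toReal :=
    (lp.memℓp x).summable (by norm_num)
  have h1 : Summable fun k : ℤ => ‖x (σ k)‖ ^ (2 : ℝ≥0∞).toReal := by
    exact hx.comp_injective hσ
  refine h1.of_nonneg_of_le (fun k => by positivity) (fun k => ?_)
  show ‖(if c k then x (σ k) else 0 : ℂ)‖ ^ (2 : ℝ≥0∞).toReal ≤ _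
  split_ifs with h
  · exact le_rfl
  · simp only [norm_zero]
    rw [Real.zero_rpow (by norm_num)]
    positivity

/-- The "partial composition" linear map. -/
def compL (hσ : Function.Injective σ) : H →ₗ[ℂ] H where
  toFun x := ⟨F σ c x, memF σ c hσ x⟩
  map_add' x y := by
    apply lp.ext
    funext k
    have : ((x + y : H) : ∀ _ : ℤ, ℂ) = (x : ∀ _ : ℤ, ℂ) + y := lp.coeFn_add x y
    show F σ c (x + y) k = ((⟨F σ c x, _⟩ + ⟨F σ c y, _⟩ : H) : ∀ _ : ℤ, ℂ) k
    rw [lp.coeFn_add]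
    show (if c k then (x + y : H) (σ k) else 0) =
      (if c k then x (σ k) else 0) + (if c k then y (σ k) else 0)
    rw [this]
    split_ifs <;> simp
  map_smul' a x := by
    apply lp.ext
    funext k
    have : ((a • x : H) : ∀ _ : ℤ, ℂ) = a • (x : ∀ _ : ℤ, ℂ) := lp.coeFn_smul a x
    show F σ c (a • x) k = ((a • (⟨F σ c x, _⟩ : H) : H) : ∀ _ : ℤ, ℂ) k
    rw [lp.coeFn_smul]
    show (if c k then (a • x : H) (σ k) else 0) = a • (if c k then x (σ k) else 0)
    rw [this]
    split_ifs <;> simp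

lemma compL_norm (hσ : Function.Injective σ) (x : H) : ‖compL σ c hσ x‖ ≤ ‖x‖ := by
  have hp : (0 : ℝ) < (2 : ℝ≥0∞).toReal := by norm_num
  have hx : Summable fun j : ℤ => ‖x j‖ ^ (2 : ℝ≥0∞).toReal := (lp.memℓp x).summable hp
  have h1 : Summable fun k : ℤ => ‖x (σ k)‖ ^ (2 : ℝ≥0∞).toReal := by
    exact hx.comp_injective hσ
  have key : ‖compL σ c hσ x‖ ^ (2 : ℝ≥0∞).toReal ≤ ‖x‖ ^ (2 : ℝ≥0∞).toReal := by
    rw [lp.norm_rpow_eq_tsum hp, lp.norm_rpow_eq_tsum hp]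
    calc ∑' k, ‖(compL σ c hσ x) k‖ ^ (2 : ℝ≥0∞).toReal
        ≤ ∑' k, ‖x (σ k)‖ ^ (2 : ℝ≥0∞).toReal := by
          refine Summable.tsum_le_tsum (fun k => ?_) ((memF σ c hσ x).summable hp) h1
          show ‖(if c k then x (σ k) else 0 : ℂ)‖ ^ (2 : ℝ≥0∞).toReal ≤ _
          split_ifs with h
          · exact le_refl _
          · simp only [norm_zero]
            rw [Real.zero_rpow (by norm_num)]
            positivity
      _ ≤ ∑' j, ‖x j‖ ^ (2 : ℝ≥0∞).toReal :=
          tsum_comp_le_tsum_of_inj hx (fun j => by positivity) hσ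
  have h2 : (2 : ℝ≥0∞).toReal = ((2 : ℕ) : ℝ) := by norm_num
  rw [h2, Real.rpow_natCast, Real.rpow_natCast] at key
  exact (pow_le_pow_iff_left₀ (norm_nonneg _) (norm_nonneg _) (by norm_num)).mp key

/-- The "partial composition" bounded operator: `(T x) k = x (σ k)` if `c k`, else `0`. -/
def compCLM (hσ : Function.Injective σ) : H →L[ℂ] H :=
  LinearMap.mkContinuous (compL σ c hσ) 1 (fun x => by
    simpa using compL_norm σ c hσ x)

lemma compCLM_apply (hσ : Function.Injective σ) (x : H) (k : ℤ) :
    (compCLM σ c hσ x : ∀ _ : ℤ, ℂ) k = if c k then x (σ k) else 0 := rfl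

lemma compCLM_single (hσ : Function.Injective σ) {b k : ℤ} (hck : c k) (hσk : σ k = b) :
    compCLM σ c hσ (e b) = e k := by
  apply lp.ext
  funext j
  simp only [compCLM_apply, e_apply]
  by_cases hj : j = k
  · subst hj
    rw [if_pos hck, if_pos hσk, if_pos rfl]
  · rw [if_neg hj]
    split_ifs with h1 h2
    · exact absurd (hσ (h2.trans hσk.symm)) hj
    · rfl
    · rfl

lemma compCLM_zero (hσ : Function.Injective σ) {b : ℤ} (h : ∀ k, c k → σ k ≠ b) :
    compCLM σ c hσ (e b) = 0 := by
  apply lp.ext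
  funext j
  simp only [compCLM_apply, e_apply, lp.coeFn_zero, Pi.zero_apply]
  split_ifs with h1 h2
  · exact absurd h2 (h j h1)
  · rfl
  · rfl

end LeftShiftAux

open LeftShiftAux

/-- Let `U` be the left shift (`U e_b = e_{b-1}`) on `ℓ²(ℤ)` and `f : ℕ⁺ → {0,1}` a sequence
whose Cesàro means do not converge.  Then there is a bounded operator `A` with `A e_b =
e_{f(-b)-b}` for `b < 0` and `A e_b = e_b` for `b ≥ 0`; moreover for any such `A` one has
`⟨Uⁿ A Uⁿ e₀, e₀⟩ = 1 - f(n)` for all `n ≥ 1`, and the Cesàro means `(1/N) ∑_{n=1}^N Uⁿ A Uⁿ`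
do not converge in the weak operator topology. -/
theorem leftShift_example
    (f : ℕ → ℕ) (hf01 : ∀ n : ℕ, 1 ≤ n → f n = 0 ∨ f n = 1)
    (hf : ¬ ∃ c : ℝ,
      Tendsto (fun N : ℕ => (∑ n ∈ Finset.Icc 1 N, (f n : ℝ)) / N) atTop (nhds c))
    (U : H →L[ℂ] H) (hU : ∀ b : ℤ, U (e b) = e (b - 1)) :
    -- `A` exists as a bounded operator
    (∃ A : H →L[ℂ] H,
      (∀ b : ℤ, b < 0 → A (e b) = e ((f (-b).toNat : ℤ) - b)) ∧
      (∀ b : ℤ, 0 ≤ b → A (e b) = e b)) ∧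
    -- and for any such bounded operator `A`:
    (∀ A : H →L[ℂ] H,
      (∀ b : ℤ, b < 0 → A (e b) = e ((f (-b).toNat : ℤ) - b)) →
      (∀ b : ℤ, 0 ≤ b → A (e b) = e b) →
      -- `⟨Uⁿ A Uⁿ e₀, e₀⟩ = 1 - f(n)` for all `n ≥ 1`
      (∀ n : ℕ, 1 ≤ n →
        (inner ℂ (((U ^ n) * A * (U ^ n)) (e 0)) (e 0) : ℂ) = 1 - (f n : ℂ)) ∧
      -- the Cesàro means `(1/N) ∑_{n=1}^N Uⁿ A Uⁿ` do not converge in the weak operator topology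
      ¬ (∀ x y : H, ∃ c : ℂ,
          Tendsto
            (fun N : ℕ =>
              (inner ℂ (((N : ℂ)⁻¹ • ∑ n ∈ Finset.Icc 1 N, U ^ n * A * U ^ n) x) y : ℂ))
            atTop (nhds c))) := by
  constructor
  · -- construction of `A`
    have hinj3 : Function.Injective (fun k : ℤ => 1 - k) := by
      intro a b h
      simp only at h
      omega
    set T1 := compCLM id (fun k : ℤ => 0 ≤ k) Function.injective_id with hT1
    set T2 := compCLM (fun k : ℤ => -k) (fun k => 1 ≤ k ∧ f k.toNat = 0) neg_injective with hT2
    set T3 := compCLM (fun k : ℤ => 1 - k) (fun k => 2 ≤ k ∧ f (k - 1).toNat = 1) hinj3 with hT3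
    refine ⟨T1 + T2 + T3, ?_, ?_⟩
    · intro b hb
      have hb1 : 1 ≤ (-b).toNat := by omega
      rcases hf01 _ hb1 with h0 | h1
      · have e1 : T1 (e b) = 0 := by
          refine compCLM_zero _ _ _ (fun k hk => ?_)
          show k ≠ b
          omega
        have e2 : T2 (e b) = e (-b) := by
          refine compCLM_single _ _ _ ⟨by omega, h0⟩ ?_
          show -(-b) = b
          omega
        have e3 : T3 (e b) = 0 := by
          refine compCLM_zero _ _ _ (fun k hk => ?_)
          show 1 - k ≠ b
          intro heq
          have hk2 := hk.2
          rw [show k - 1 = -b by omega] at hk2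
          omega
        rw [ContinuousLinearMap.add_apply, ContinuousLinearMap.add_apply, e1, e2, e3,
          zero_add, add_zero, h0]
        norm_num
      · have e1 : T1 (e b) = 0 := by
          refine compCLM_zero _ _ _ (fun k hk => ?_)
          show k ≠ b
          omega
        have e2 : T2 (e b) = 0 := by
          refine compCLM_zero _ _ _ (fun k hk => ?_)
          show -k ≠ b
          intro heq
          have hk2 := hk.2
          rw [show k = -b by omega] at hk2
          omega
        have e3 : T3 (e b) = e (1 - b) := by
          refine compCLM_single _ _ _ ⟨by omega, ?_⟩ ?_
          · rw [show (1 : ℤ) - b - 1 = -b by ring]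
            exact h1
          · show 1 - (1 - b) = b
            omega
        rw [ContinuousLinearMap.add_apply, ContinuousLinearMap.add_apply, e1, e2, e3,
          zero_add, zero_add, h1]
        norm_num
    · intro b hb
      have e1 : T1 (e b) = e b := by
        refine compCLM_single _ _ _ (show (0:ℤ) ≤ b from hb) rfl
      have e2 : T2 (e b) = 0 := by
        refine compCLM_zero _ _ _ (fun k hk => ?_)
        show -k ≠ b
        omega
      have e3 : T3 (e b) = 0 := by
        refine compCLM_zero _ _ _ (fun k hk => ?_)
        show 1 - k ≠ b
        omega
      rw [ContinuousLinearMap.add_apply, ContinuousLinearMap.add_apply, e1, e2, e3,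
        add_zero, add_zero]
  · intro A hA1 _hA2
    have hUn : ∀ (n : ℕ) (b : ℤ), (U ^ n) (e b) = e (b - n) := by
      intro n
      induction n with
      | zero => intro b; simp
      | succ n ih =>
        intro b
        rw [pow_succ, ContinuousLinearMap.mul_apply, hU b, ih]
        congr 1
        push_cast
        ring
    have key : ∀ n : ℕ, 1 ≤ n → ((U ^ n) * A * (U ^ n)) (e 0) = e (f n) := by
      intro n hn
      have hneg : -(n : ℤ) < 0 := by omega
      simp only [ContinuousLinearMap.mul_apply]
      rw [hUn n 0, zero_sub, hA1 _ hneg]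
      rw [show ((f (- -(n:ℤ)).toNat : ℤ) - -(n:ℤ)) = (f n : ℤ) + n by
        rw [neg_neg, Int.toNat_natCast]; ring]
      rw [hUn]
      congr 1
      ring
    have hinner : ∀ n : ℕ, 1 ≤ n →
        (inner ℂ (((U ^ n) * A * (U ^ n)) (e 0)) (e 0) : ℂ) = 1 - (f n : ℂ) := by
      intro n hn
      rw [key n hn]
      unfold e
      rw [lp.inner_single_left]
      rcases hf01 n hn with h | h <;>
        simp [h, lp.single_apply, RCLike.inner_apply]
    refine ⟨hinner, ?_⟩
    intro hcontra
    obtain ⟨c, hc⟩ := hcontra (e 0) (e 0)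
    have heq : ∀ N : ℕ,
        (inner ℂ (((N : ℂ)⁻¹ • ∑ n ∈ Finset.Icc 1 N, U ^ n * A * U ^ n) (e 0)) (e 0) : ℂ)
          = (N : ℂ)⁻¹ * ((N : ℂ) - ∑ n ∈ Finset.Icc 1 N, (f n : ℂ)) := by
      intro N
      rw [ContinuousLinearMap.smul_apply, inner_smul_left, ContinuousLinearMap.sum_apply,
        sum_inner]
      congr 1
      · simp
      · rw [Finset.sum_congr rfl (fun n hn => hinner n (Finset.mem_Icc.mp hn).1)]
        rw [Finset.sum_sub_distrib, Finset.sum_const, Nat.card_Icc]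
        simp
    have hc' : Tendsto (fun N : ℕ => (((∑ n ∈ Finset.Icc 1 N, (f n : ℝ)) / N : ℝ) : ℂ))
        atTop (nhds (1 - c)) := by
      have h1 : Tendsto (fun N : ℕ =>
          (1 : ℂ) - (inner ℂ (((N : ℂ)⁻¹ • ∑ n ∈ Finset.Icc 1 N, U ^ n * A * U ^ n) (e 0))
            (e 0) : ℂ)) atTop (nhds (1 - c)) := tendsto_const_nhds.sub hc
      refine Tendsto.congr' ?_ h1
      filter_upwards [eventually_ge_atTop 1] with N hN
      rw [heq N]
      have hN0 : (N : ℂ) ≠ 0 := Nat.cast_ne_zero.mpr (by omega)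
      push_cast
      field_simp
      ring
    refine hf ⟨(1 - c).re, ?_⟩
    have h2 := (Complex.continuous_re.tendsto (1 - c)).comp hc'
    simpa [Function.comp_def] using h2

end
end

section
/- Let X be a Banach space, k ≤ m positive integers, and α : {1,…,m} → {1,…,k} a surjective map. Let T₁,…,T_{m−1} be almost periodic bounded linear operators on X, let T_m be power bounded and totally ergodic, and let A₁,…,A_{m−1} be bounded linear operators on X. Then the entangled Cesàro means (1/N^k) ∑_{n₁,…,n_k=1}^{N} T_m^{n_{α(m)}} A_{m−1} T_{m−1}^{n_{α(m−1)}} A_{m−2} ⋯ A₁ T₁^{n_{α(1)}} converge in the strong operator topology as N → ∞; that is, for every x ∈ X the vectors (1/N^k) ∑_{n₁,…,n_k=1}^{N} T_m^{n_{α(m)}} A_{m−1} ⋯ A₁ T₁^{n_{α(1)}} x converge in norm. -/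
open Filter Topology

noncomputable section

variable {X : Type*} [NormedAddCommGroup X] [NormedSpace ℂ X]

/-- An operator is power bounded if `sup_n ‖Tⁿ‖ < ∞`. -/
def PowerBounded (T : X →L[ℂ] X) : Prop :=
  ∃ C : ℝ, ∀ n : ℕ, ‖T ^ n‖ ≤ C

/-- An operator is almost periodic if it is power bounded and the unimodular eigenvectors
span a dense subspace. -/
def AlmostPeriodic (T : X →L[ℂ] X) : Prop :=
  PowerBounded T ∧
    (Submodule.span ℂ {x : X | ∃ lam : ℂ, ‖lam‖ = 1 ∧ T x = lam • x}).topologicalClosure = ⊤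

/-- An operator is totally ergodic if for every unimodular `λ` the Cesàro means
`(1/N) ∑_{n=1}^N (λT)ⁿ` converge in the strong operator topology. -/
def TotallyErgodic (T : X →L[ℂ] X) : Prop :=
  ∀ lam : ℂ, ‖lam‖ = 1 → ∀ x : X, ∃ y : X,
    Tendsto (fun N : ℕ => (N : ℂ)⁻¹ • ∑ n ∈ Finset.Icc 1 N, ((lam • T) ^ n) x) atTop (nhds y)

/-- The entangled word `T_m^{e m} A_{m-1} T_{m-1}^{e (m-1)} ⋯ A_1 T_1^{e 1}` (indices shifted
to start at `0`). -/
def entangledWord : (m : ℕ) → (Fin (m + 1) → (X →L[ℂ] X)) → (Fin m → (X →L[ℂ] X)) →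
    (Fin (m + 1) → ℕ) → (X →L[ℂ] X)
  | 0, T, _, ex => T 0 ^ ex 0
  | (m + 1), T, A, ex =>
      (T (Fin.last (m + 1)) ^ ex (Fin.last (m + 1))) * A (Fin.last m) *
        entangledWord m (fun j => T j.castSucc) (fun j => A j.castSucc) (fun j => ex j.castSucc)

lemma pb_smul (T : X →L[ℂ] X) (c : ℂ) (hc : ‖c‖ = 1) (h : PowerBounded T) :
    PowerBounded (c • T) := by
  obtain ⟨C, hC⟩ := h
  refine ⟨C, fun n => ?_⟩
  rw [smul_pow]
  calc ‖c ^ n • T ^ n‖ ≤ ‖c ^ n‖ * ‖T ^ n‖ := ContinuousLinearMap.opNorm_smul_le _ _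
    _ ≤ C := by rw [norm_pow, hc, one_pow, one_mul]; exact hC n

lemma ap_smul (T : X →L[ℂ] X) (c : ℂ) (hc : ‖c‖ = 1) (h : AlmostPeriodic T) :
    AlmostPeriodic (c • T) := by
  have hc0 : c ≠ 0 := fun h0 => by simp [h0] at hc
  refine ⟨pb_smul T c hc h.1, ?_⟩
  rw [← h.2]
  congr 2
  ext x
  simp only [Set.mem_setOf_eq, ContinuousLinearMap.smul_apply]
  constructor
  · rintro ⟨lam, hl, hx⟩
    refine ⟨c⁻¹ * lam, by rw [norm_mul, norm_inv, hc, hl, inv_one, one_mul], ?_⟩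
    have := congrArg (fun y => c⁻¹ • y) hx
    simpa [smul_smul, inv_mul_cancel₀ hc0] using this
  · rintro ⟨lam, hl, hx⟩
    exact ⟨c * lam, by rw [norm_mul, hc, hl, one_mul], by rw [hx, smul_smul]⟩

lemma te_smul (T : X →L[ℂ] X) (c : ℂ) (hc : ‖c‖ = 1) (h : TotallyErgodic T) :
    TotallyErgodic (c • T) := by
  intro lam hl x
  have := h (lam * c) (by rw [norm_mul, hl, hc, one_mul]) x
  simpa [smul_smul] using this

lemma pow_eigen (T : X →L[ℂ] X) (c : ℂ) (x : X) (hx : T x = c • x) (n : ℕ) :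
    (T ^ n) x = c ^ n • x := by
  induction n with
  | zero => simp
  | succ n ih =>
      rw [pow_succ, ContinuousLinearMap.mul_apply, hx, map_smul, ih, smul_smul, pow_succ, mul_comm]

/-- Peel off the innermost (bottom) factor. -/
lemma entangledWord_peel : ∀ (m : ℕ) (T : Fin (m + 2) → (X →L[ℂ] X))
    (A : Fin (m + 1) → (X →L[ℂ] X)) (e : Fin (m + 2) → ℕ),
    entangledWord (m + 1) T A e =
      entangledWord m (fun j => T j.succ) (fun j => A j.succ) (fun j => e j.succ) *
        A 0 * T 0 ^ e 0 := by
  intro m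
  induction m with
  | zero =>
      intro T A e
      show _ = (fun j : Fin 1 => T j.succ) 0 ^ (fun j : Fin 1 => e j.succ) 0 * A 0 * T 0 ^ e 0
      simp only [entangledWord]
      norm_num [Fin.last, mul_assoc]
  | succ m ih =>
      intro T A e
      show (T (Fin.last (m + 2)) ^ e (Fin.last (m + 2))) * A (Fin.last (m + 1)) *
          entangledWord (m + 1) (fun j => T j.castSucc) (fun j => A j.castSucc)
            (fun j => e j.castSucc) = _
      rw [ih]
      simp only [Fin.succ_castSucc, mul_assoc]
      rfl

/-- Rescaling the operators by scalars rescales the entangled word. -/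
lemma entangledWord_smul : ∀ (m : ℕ) (T T' : Fin (m + 1) → (X →L[ℂ] X))
    (A : Fin m → (X →L[ℂ] X)) (c : Fin (m + 1) → ℂ) (_ : ∀ j, T' j = c j • T j)
    (e : Fin (m + 1) → ℕ),
    entangledWord m T' A e = (∏ j, c j ^ e j) • entangledWord m T A e := by
  intro m
  induction m with
  | zero =>
      intro T T' A c hc e
      show T' 0 ^ e 0 = _ • (T 0 ^ e 0)
      rw [hc 0, smul_pow, Fin.prod_univ_one]
  | succ m ih =>
      intro T T' A c hc e
      show (T' (Fin.last (m + 1)) ^ e (Fin.last (m + 1))) * A (Fin.last m) *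
          entangledWord m (fun j => T' j.castSucc) (fun j => A j.castSucc)
            (fun j => e j.castSucc) = _
      rw [ih (fun j => T j.castSucc) (fun j => T' j.castSucc) (fun j => A j.castSucc)
          (fun j => c j.castSucc) (fun j => hc j.castSucc) (fun j => e j.castSucc),
        hc (Fin.last (m + 1)), smul_pow]
      conv_rhs => rw [Fin.prod_univ_castSucc]
      simp only [smul_mul_assoc, mul_smul_comm, smul_smul]
      rw [mul_comm]
      rfl

/-- Uniform bound of entangled words when all operators are power bounded. -/
lemma entangledWord_bound : ∀ (m : ℕ) (T : Fin (m + 1) → (X →L[ℂ] X))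
    (A : Fin m → (X →L[ℂ] X)) (_ : ∀ j, PowerBounded (T j)),
    ∃ D : ℝ, 0 ≤ D ∧ ∀ e : Fin (m + 1) → ℕ, ‖entangledWord m T A e‖ ≤ D := by
  intro m
  induction m with
  | zero =>
      intro T A hT
      obtain ⟨C, hC⟩ := hT 0
      exact ⟨C, le_trans (norm_nonneg _) (hC 0), fun e => hC (e 0)⟩
  | succ m ih =>
      intro T A hT
      obtain ⟨D, hD0, hD⟩ := ih (fun j => T j.castSucc) (fun j => A j.castSucc)
        (fun j => hT j.castSucc)
      obtain ⟨C, hC⟩ := hT (Fin.last (m + 1))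
      have hC0 : 0 ≤ C := le_trans (norm_nonneg _) (hC 0)
      refine ⟨C * ‖A (Fin.last m)‖ * D, by positivity, fun e => ?_⟩
      show ‖(T (Fin.last (m + 1)) ^ e (Fin.last (m + 1))) * A (Fin.last m) * _‖ ≤ _
      calc ‖_ * A (Fin.last m) * _‖ ≤
            ‖(T (Fin.last (m + 1)) ^ e (Fin.last (m + 1))) * A (Fin.last m)‖ *
              ‖entangledWord m (fun j => T j.castSucc) (fun j => A j.castSucc)
                (fun j => e j.castSucc)‖ := norm_mul_le _ _
        _ ≤ ‖T (Fin.last (m + 1)) ^ e (Fin.last (m + 1))‖ * ‖A (Fin.last m)‖ * D := by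
            refine mul_le_mul (norm_mul_le _ _) (hD _) (norm_nonneg _) (by positivity)
        _ ≤ C * ‖A (Fin.last m)‖ * D := by
            refine mul_le_mul_of_nonneg_right (mul_le_mul_of_nonneg_right (hC _)
              (norm_nonneg _)) hD0

/-- Convergence passes to the closure under a uniform operator norm bound. -/
lemma converge_of_closure [CompleteSpace X] (S : ℕ → (X →L[ℂ] X)) (C : ℝ)
    (hS : ∀ N, ‖S N‖ ≤ C) (G : Set X)
    (hG : ∀ x ∈ G, ∃ y, Tendsto (fun N => S N x) atTop (nhds y))
    (x : X) (hx : x ∈ closure G) :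
    ∃ y, Tendsto (fun N => S N x) atTop (nhds y) := by
  have hC0 : 0 ≤ C := le_trans (norm_nonneg _) (hS 0)
  apply cauchySeq_tendsto_of_complete
  rw [Metric.cauchySeq_iff]
  intro ε hε
  have hden : (0:ℝ) < 3 * (C + 1) := by positivity
  obtain ⟨x', hx'G, hx'⟩ := Metric.mem_closure_iff.1 hx (ε / (3 * (C + 1))) (by positivity)
  obtain ⟨y, hy⟩ := hG x' hx'G
  obtain ⟨M, hM⟩ := Metric.cauchySeq_iff.1 hy.cauchySeq (ε / 3) (by positivity)
  refine ⟨M, fun p hp q hq => ?_⟩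
  have key : ∀ N, dist (S N x) (S N x') ≤ ε / 3 := by
    intro N
    rw [dist_eq_norm, ← map_sub]
    calc ‖S N (x - x')‖ ≤ ‖S N‖ * ‖x - x'‖ := (S N).le_opNorm _
      _ ≤ C * ‖x - x'‖ := mul_le_mul_of_nonneg_right (hS N) (norm_nonneg _)
      _ ≤ C * (ε / (3 * (C + 1))) := by
          refine mul_le_mul_of_nonneg_left ?_ hC0
          rw [← dist_eq_norm]; exact le_of_lt hx'
      _ ≤ ε / 3 := by
          rw [mul_comm, div_mul_eq_mul_div, div_le_div_iff₀ hden (by norm_num : (0:ℝ) < 3)]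
          nlinarith
  calc dist (S p x) (S q x) ≤ dist (S p x) (S p x') + dist (S p x') (S q x')
        + dist (S q x') (S q x) := dist_triangle4 _ _ _ _
    _ < ε / 3 + ε / 3 + ε / 3 := by
        have := hM p hp q hq
        have k1 := key p
        have k2 := key q
        rw [dist_comm (S q x') (S q x)]
        linarith
    _ = ε := by ring

/-- The scalar Cesàro means of a unimodular number converge. -/
lemma cesaro_scalar (lam : ℂ) (hl : ‖lam‖ = 1) :
    ∃ c : ℂ, Tendsto (fun N : ℕ => (N : ℂ)⁻¹ * ∑ n ∈ Finset.Icc 1 N, lam ^ n)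
      atTop (nhds c) := by
  by_cases h1 : lam = 1
  · refine ⟨1, ?_⟩
    apply Tendsto.congr' _ tendsto_const_nhds
    filter_upwards [eventually_ge_atTop 1] with N hN
    have hN0 : (N : ℂ) ≠ 0 := Nat.cast_ne_zero.2 (by omega)
    simp [h1, Nat.card_Icc, inv_mul_cancel₀ hN0]
  · refine ⟨0, ?_⟩
    have hne : lam - 1 ≠ 0 := sub_ne_zero.2 h1
    have hne' : ‖lam - 1‖ ≠ 0 := norm_ne_zero_iff.2 hne
    refine squeeze_zero_norm (a := fun N : ℕ => (2 / ‖lam - 1‖) / N) (fun N => ?_)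
      (Tendsto.div_atTop tendsto_const_nhds tendsto_natCast_atTop_atTop)
    have hsum : ∑ n ∈ Finset.Icc 1 N, lam ^ n = lam * ((lam ^ N - 1) / (lam - 1)) := by
      rw [← Finset.Ico_add_one_right_eq_Icc, Finset.sum_Ico_eq_sum_range]
      simp only [Nat.add_sub_cancel, pow_add, pow_one]
      rw [← Finset.mul_sum]
      rw [geom_sum_eq h1]
    rw [hsum, norm_mul, norm_mul, hl]
    rw [norm_inv, Complex.norm_natCast, one_mul, norm_div]
    have hb : ‖lam ^ N - 1‖ ≤ 2 := by
      calc ‖lam ^ N - 1‖ ≤ ‖lam ^ N‖ + ‖(1:ℂ)‖ := norm_sub_le _ _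
        _ = 2 := by rw [norm_pow, hl, one_pow, norm_one]; norm_num
    calc (N:ℝ)⁻¹ * (‖lam ^ N - 1‖ / ‖lam - 1‖) ≤ (N:ℝ)⁻¹ * (2 / ‖lam - 1‖) := by
          gcongr
      _ = 2 / ‖lam - 1‖ / (N:ℝ) := by rw [div_eq_mul_inv (2 / ‖lam - 1‖), mul_comm]

lemma sum_piFinset_comp_equiv {M : Type*} [AddCommMonoid M] (k : ℕ) (s : Finset ℕ)
    (σ : Fin k ≃ Fin k) (f : (Fin k → ℕ) → M) :
    ∑ n ∈ Fintype.piFinset (fun _ : Fin k => s), f (fun j => n (σ j)) =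
      ∑ n ∈ Fintype.piFinset (fun _ : Fin k => s), f n := by
  refine Finset.sum_nbij' (fun n => fun j => n (σ j)) (fun n => fun j => n (σ.symm j))
    ?_ ?_ ?_ ?_ ?_
  · intro n hn; simp only [Fintype.mem_piFinset] at hn ⊢; exact fun j => hn _
  · intro n hn; simp only [Fintype.mem_piFinset] at hn ⊢; exact fun j => hn _
  · intro n _; funext j; simp
  · intro n _; funext j; simp
  · intro n _; rfl

lemma sum_piFinset_snoc {M : Type*} [AddCommMonoid M] (k : ℕ) (s : Finset ℕ)
    (g : (Fin (k + 1) → ℕ) → M) :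
    ∑ n ∈ Fintype.piFinset (fun _ : Fin (k + 1) => s), g n =
      ∑ p ∈ Fintype.piFinset (fun _ : Fin k => s), ∑ a ∈ s, g (Fin.snoc p a) := by
  rw [← Finset.sum_product']
  refine Finset.sum_nbij' (fun n => (fun j => n j.castSucc, n (Fin.last k)))
    (fun pa => Fin.snoc pa.1 pa.2) ?_ ?_ ?_ ?_ ?_
  · intro n hn
    simp only [Fintype.mem_piFinset] at hn
    simp only [Finset.mem_product, Fintype.mem_piFinset]
    exact ⟨fun j => hn _, hn _⟩
  · intro pa hpa
    simp only [Finset.mem_product, Fintype.mem_piFinset] at hpa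
    simp only [Fintype.mem_piFinset]
    intro j
    rcases Fin.eq_castSucc_or_eq_last j with ⟨i, rfl⟩ | rfl
    · rw [Fin.snoc_castSucc]; exact hpa.1 i
    · rw [Fin.snoc_last]; exact hpa.2
  · intro n _
    exact Fin.snoc_init_self n
  · intro pa _
    simp [Fin.snoc_castSucc, Fin.snoc_last]
  · intro n _
    exact congrArg g (Fin.snoc_init_self n).symm

theorem main_aux [CompleteSpace X] : ∀ (m k : ℕ), 0 < k → k ≤ m + 1 →
    ∀ (α : Fin (m + 1) → Fin k), Function.Surjective α →
    ∀ (T : Fin (m + 1) → (X →L[ℂ] X)) (A : Fin m → (X →L[ℂ] X)),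
    (∀ j : Fin m, AlmostPeriodic (T j.castSucc)) →
    PowerBounded (T (Fin.last m)) → TotallyErgodic (T (Fin.last m)) →
    ∀ x : X, ∃ y : X,
      Tendsto
        (fun N : ℕ =>
          ((N : ℂ) ^ k)⁻¹ •
            ∑ n ∈ Fintype.piFinset (fun _ : Fin k => Finset.Icc 1 N),
              entangledWord m T A (fun j => n (α j)) x)
        atTop (nhds y) := by
  intro m
  induction m with
  | zero =>
      intro k hk hkm α hα T A hAP hPB hTE x
      -- here k = 1
      obtain rfl : k = 1 := le_antisymm hkm hk
      obtain ⟨y, hy⟩ := hTE 1 (by simp) x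
      refine ⟨y, ?_⟩
      have heq : ∀ N : ℕ,
          ((N : ℂ) ^ 1)⁻¹ • ∑ n ∈ Fintype.piFinset (fun _ : Fin 1 => Finset.Icc 1 N),
              entangledWord 0 T A (fun j => n (α j)) x =
            (N : ℂ)⁻¹ • ∑ n ∈ Finset.Icc 1 N, (((1 : ℂ) • T (Fin.last 0)) ^ n) x := by
        intro N
        rw [pow_one, one_smul]
        congr 1
        refine Finset.sum_nbij' (fun n => n 0) (fun a => fun _ => a) ?_ ?_ ?_ ?_ ?_
        · intro n hn; simp only [Fintype.mem_piFinset] at hn; exact hn 0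
        · intro a ha; simp only [Fintype.mem_piFinset]; intro j; exact ha
        · intro n _; funext j; exact congrArg n (Fin.eq_zero j).symm
        · intro a _; rfl
        · intro n _
          show ((T 0 ^ (n (α 0)))) x = (T (Fin.last 0) ^ n 0) x
          rw [Fin.eq_zero (α 0)]
          rfl
      simp only [heq]
      exact hy
  | succ m ih =>
      intro k hk hkm α hα T A hAP hPB hTE
      -- all T j are power bounded
      have hPBall : ∀ j : Fin (m + 2), PowerBounded (T j) := by
        intro j
        rcases Fin.eq_castSucc_or_eq_last j with ⟨i, rfl⟩ | rfl
        · exact (hAP i).1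
        · exact hPB
      obtain ⟨D, hD0, hD⟩ := entangledWord_bound (m + 1) T A hPBall
      set S : ℕ → (X →L[ℂ] X) := fun N =>
        ((N : ℂ) ^ k)⁻¹ •
          ∑ n ∈ Fintype.piFinset (fun _ : Fin k => Finset.Icc 1 N),
            entangledWord (m + 1) T A (fun j => n (α j)) with hS
      have hSapply : ∀ (N : ℕ) (x : X), S N x =
          ((N : ℂ) ^ k)⁻¹ •
            ∑ n ∈ Fintype.piFinset (fun _ : Fin k => Finset.Icc 1 N),
              entangledWord (m + 1) T A (fun j => n (α j)) x := by
        intro N x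
        simp [hS, ContinuousLinearMap.smul_apply, ContinuousLinearMap.sum_apply]
      have hSnorm : ∀ N, ‖S N‖ ≤ D := by
        intro N
        rcases Nat.eq_zero_or_pos N with rfl | hN
        · simp only [hS]
          rw [Nat.cast_zero, zero_pow hk.ne', inv_zero, zero_smul]
          simpa using hD0
        · have hcard : (Fintype.piFinset (fun _ : Fin k => Finset.Icc 1 N)).card = N ^ k := by
            rw [Fintype.card_piFinset]
            simp [Nat.card_Icc]
          calc ‖S N‖ ≤ ‖((N : ℂ) ^ k)⁻¹‖ *
                ‖∑ n ∈ Fintype.piFinset (fun _ : Fin k => Finset.Icc 1 N),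
                  entangledWord (m + 1) T A (fun j => n (α j))‖ :=
              ContinuousLinearMap.opNorm_smul_le _ _
            _ ≤ ((N : ℝ) ^ k)⁻¹ * ((N ^ k : ℕ) * D) := by
                refine mul_le_mul ?_ ?_ (norm_nonneg _) (by positivity)
                · rw [norm_inv, norm_pow, Complex.norm_natCast]
                · rw [← hcard]
                  refine le_trans (norm_sum_le _ _) ?_
                  rw [← nsmul_eq_mul]
                  exact Finset.sum_le_card_nsmul _ _ _ (fun n _ => hD _)
            _ = D := by
                rw [Nat.cast_pow]
                rw [inv_mul_eq_div, mul_comm, mul_div_assoc]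
                rw [div_self (by positivity), mul_one]
      -- the set of good vectors is a submodule
      set G : Submodule ℂ X :=
        { carrier := {x : X | ∃ y : X, Tendsto (fun N => S N x) atTop (nhds y)}
          add_mem' := by
            rintro a b ⟨ya, hya⟩ ⟨yb, hyb⟩
            exact ⟨ya + yb, by simpa [map_add] using hya.add hyb⟩
          zero_mem' := ⟨0, by simpa using tendsto_const_nhds⟩
          smul_mem' := by
            rintro c a ⟨ya, hya⟩
            exact ⟨c • ya, by simpa [map_smul] using hya.const_smul c⟩ } with hG
      -- every unimodular eigenvector of T 0 is good
      have heig : ∀ x : X, (∃ lam : ℂ, ‖lam‖ = 1 ∧ T 0 x = lam • x) → x ∈ G := by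
        rintro x ⟨lam, hl, hxe⟩
        have hword : ∀ e : Fin (m + 2) → ℕ,
            entangledWord (m + 1) T A e x =
              lam ^ e 0 • entangledWord m (fun j => T j.succ) (fun j => A j.succ)
                (fun j => e j.succ) (A 0 x) := by
          intro e
          rw [entangledWord_peel]
          rw [ContinuousLinearMap.mul_apply, ContinuousLinearMap.mul_apply,
            pow_eigen (T 0) lam x hxe, map_smul, map_smul]
        by_cases hcase : ∃ j : Fin (m + 1), α j.succ = α 0
        · -- Case 1 : the index of position 0 also occurs at a later position
          obtain ⟨j0, hj0⟩ := hcase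
          have hki : k ≤ m + 1 := by
            rcases Nat.lt_or_ge k (m + 2) with h | h
            · omega
            · exfalso
              have hkeq : k = m + 2 := le_antisymm hkm h
              have hbij : Function.Bijective α :=
                (Fintype.bijective_iff_surjective_and_card α).2
                  ⟨hα, by simp [hkeq]⟩
              exact Fin.succ_ne_zero j0 (hbij.injective hj0)
          set T' : Fin (m + 1) → (X →L[ℂ] X) :=
            Function.update (fun j : Fin (m + 1) => T j.succ) j0 (lam • T j0.succ) with hT'
          have hT'eq : ∀ j, T' j = (if j = j0 then lam else 1) • T j.succ := by
            intro j
            by_cases h : j = j0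
            · subst h; simp [hT']
            · simp [hT', Function.update_of_ne h, h]
          have hsurj' : Function.Surjective (fun j : Fin (m + 1) => α j.succ) := by
            intro i
            obtain ⟨j, hj⟩ := hα i
            rcases Fin.eq_zero_or_eq_succ j with rfl | ⟨j', rfl⟩
            · exact ⟨j0, by show α j0.succ = i; rw [hj0, hj]⟩
            · exact ⟨j', hj⟩
          have hAP' : ∀ j : Fin m, AlmostPeriodic (T' j.castSucc) := by
            intro j
            rw [hT'eq]
            have hsc : AlmostPeriodic (T j.castSucc.succ) := by
              rw [Fin.succ_castSucc]; exact hAP j.succ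
            by_cases h : j.castSucc = j0
            · rw [if_pos h]; exact ap_smul _ _ hl hsc
            · rw [if_neg h, one_smul]; exact hsc
          have hlastsucc : (Fin.last m).succ = Fin.last (m + 1) := rfl
          have hPB' : PowerBounded (T' (Fin.last m)) := by
            rw [hT'eq, hlastsucc]
            by_cases h : Fin.last m = j0
            · rw [if_pos h]; exact pb_smul _ _ hl hPB
            · rw [if_neg h, one_smul]; exact hPB
          have hTE' : TotallyErgodic (T' (Fin.last m)) := by
            rw [hT'eq, hlastsucc]
            by_cases h : Fin.last m = j0
            · rw [if_pos h]; exact te_smul _ _ hl hTE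
            · rw [if_neg h, one_smul]; exact hTE
          obtain ⟨y, hy⟩ := ih k hk hki (fun j => α j.succ) hsurj' T' (fun j => A j.succ)
            hAP' hPB' hTE' (A 0 x)
          refine ⟨y, ?_⟩
          have hEq : ∀ N, S N x = ((N : ℂ) ^ k)⁻¹ •
              ∑ n ∈ Fintype.piFinset (fun _ : Fin k => Finset.Icc 1 N),
                entangledWord m T' (fun j => A j.succ) (fun j => n (α j.succ)) (A 0 x) := by
            intro N
            rw [hSapply]
            congr 1
            refine Finset.sum_congr rfl (fun n _ => ?_)
            rw [hword, entangledWord_smul m (fun j => T j.succ) T' (fun j => A j.succ)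
              (fun j => if j = j0 then lam else 1) hT'eq (fun j => n (α j.succ)),
              ContinuousLinearMap.smul_apply]
            congr 1
            rw [Finset.prod_eq_single j0 (fun b _ hb => by rw [if_neg hb, one_pow])
              (fun h => absurd (Finset.mem_univ j0) h), if_pos rfl, hj0]
          simp only [hEq] at *
          exact hy
        · -- Case 2 : the index of position 0 occurs only there
          push_neg at hcase
          obtain ⟨k', rfl⟩ : ∃ k', k = k' + 1 := ⟨k - 1, (Nat.succ_pred_eq_of_pos hk).symm⟩
          have hk' : 0 < k' := by
            rcases Nat.eq_zero_or_pos k' with rfl | h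
            · exact absurd ((Fin.eq_zero _).trans (Fin.eq_zero _).symm) (hcase 0)
            · exact h
          set σ : Equiv.Perm (Fin (k' + 1)) := Equiv.swap (α 0) (Fin.last k') with hσ
          have hβ0 : σ (α 0) = Fin.last k' := Equiv.swap_apply_left _ _
          have hβne : ∀ j : Fin (m + 1), σ (α j.succ) ≠ Fin.last k' := by
            intro j h
            exact hcase j (σ.injective (h.trans hβ0.symm))
          set γ : Fin (m + 1) → Fin k' := fun j => (σ (α j.succ)).castPred (hβne j) with hγ
          have hγcast : ∀ j, (γ j).castSucc = σ (α j.succ) := by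
            intro j; rw [hγ]; exact Fin.castSucc_castPred _ _
          have hγs : Function.Surjective γ := by
            intro i
            obtain ⟨j, hj⟩ := hα (σ.symm i.castSucc)
            have hj' : σ (α j) = i.castSucc := by rw [hj]; simp
            have hj0 : j ≠ 0 := by
              intro h
              subst h
              rw [hβ0] at hj'
              exact absurd hj'.symm (Fin.castSucc_lt_last i).ne
            obtain ⟨j', rfl⟩ := Fin.eq_succ_of_ne_zero hj0
            refine ⟨j', ?_⟩
            apply Fin.castSucc_injective
            rw [hγcast, hj']
          have hki' : k' ≤ m + 1 := by omega
          have hAP'' : ∀ j : Fin m, AlmostPeriodic ((fun j : Fin (m + 1) => T j.succ)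
              j.castSucc) := by
            intro j
            show AlmostPeriodic (T j.castSucc.succ)
            rw [Fin.succ_castSucc]; exact hAP j.succ
          obtain ⟨y, hy⟩ := ih k' hk' hki' γ hγs (fun j => T j.succ) (fun j => A j.succ)
            hAP'' hPB hTE (A 0 x)
          obtain ⟨c, hc⟩ := cesaro_scalar lam hl
          refine ⟨c • y, ?_⟩
          have key : ∀ N, S N x =
              ((N : ℂ)⁻¹ * ∑ a ∈ Finset.Icc 1 N, lam ^ a) •
                (((N : ℂ) ^ k')⁻¹ •
                  ∑ p ∈ Fintype.piFinset (fun _ : Fin k' => Finset.Icc 1 N),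
                    entangledWord m (fun j => T j.succ) (fun j => A j.succ)
                      (fun j => p (γ j)) (A 0 x)) := by
            intro N
            have step1 : ∀ n : Fin (k' + 1) → ℕ,
                entangledWord (m + 1) T A (fun j => n (α j)) x =
                  (fun n : Fin (k' + 1) → ℕ => lam ^ n (Fin.last k') •
                    entangledWord m (fun j => T j.succ) (fun j => A j.succ)
                      (fun j => n ((γ j).castSucc)) (A 0 x)) (fun j => n (σ.symm j)) := by
              intro n
              rw [hword]
              show lam ^ n (α 0) • _ = lam ^ n (σ.symm (Fin.last k')) • _
              rw [show n (σ.symm (Fin.last k')) = n (α 0) from by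
                rw [← hβ0, Equiv.symm_apply_apply]]
              congr 1
              exact congrArg (fun e => (entangledWord m (fun j => T j.succ)
                (fun j => A j.succ) e) ((A 0) x))
                (funext fun j => show n (α j.succ) = n (σ.symm ((γ j).castSucc)) from by
                  rw [hγcast, Equiv.symm_apply_apply])
            have step2 : ∀ (p : Fin k' → ℕ) (a : ℕ),
                lam ^ (Fin.snoc p a : Fin (k' + 1) → ℕ) (Fin.last k') •
                  entangledWord m (fun j => T j.succ) (fun j => A j.succ)
                    (fun j => (Fin.snoc p a : Fin (k' + 1) → ℕ) ((γ j).castSucc)) (A 0 x) =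
                  lam ^ a • entangledWord m (fun j => T j.succ) (fun j => A j.succ)
                    (fun j => p (γ j)) (A 0 x) := by
              intro p a
              rw [Fin.snoc_last]
              congr 1
              exact congrArg (fun e => (entangledWord m (fun j => T j.succ)
                (fun j => A j.succ) e) ((A 0) x))
                (funext fun j => by rw [Fin.snoc_castSucc])
            rw [hSapply]
            calc ((N : ℂ) ^ (k' + 1))⁻¹ •
                  ∑ n ∈ Fintype.piFinset (fun _ : Fin (k' + 1) => Finset.Icc 1 N),
                    entangledWord (m + 1) T A (fun j => n (α j)) x
                = ((N : ℂ) ^ (k' + 1))⁻¹ •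
                  ∑ n ∈ Fintype.piFinset (fun _ : Fin (k' + 1) => Finset.Icc 1 N),
                    (fun n : Fin (k' + 1) → ℕ => lam ^ n (Fin.last k') •
                      entangledWord m (fun j => T j.succ) (fun j => A j.succ)
                        (fun j => n ((γ j).castSucc)) (A 0 x)) (fun j => n (σ.symm j)) := by
                  exact congrArg _ (Finset.sum_congr rfl fun n _ => step1 n)
              _ = ((N : ℂ) ^ (k' + 1))⁻¹ •
                  ∑ n ∈ Fintype.piFinset (fun _ : Fin (k' + 1) => Finset.Icc 1 N),
                    (fun n : Fin (k' + 1) → ℕ => lam ^ n (Fin.last k') •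
                      entangledWord m (fun j => T j.succ) (fun j => A j.succ)
                        (fun j => n ((γ j).castSucc)) (A 0 x)) n := by
                  exact congrArg (fun z => ((N : ℂ) ^ (k' + 1))⁻¹ • z)
                    (sum_piFinset_comp_equiv (k' + 1) (Finset.Icc 1 N) σ.symm
                      (fun n => lam ^ n (Fin.last k') •
                        entangledWord m (fun j => T j.succ) (fun j => A j.succ)
                          (fun j => n ((γ j).castSucc)) (A 0 x)))
              _ = ((N : ℂ) ^ (k' + 1))⁻¹ •
                  ∑ p ∈ Fintype.piFinset (fun _ : Fin k' => Finset.Icc 1 N),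
                    ∑ a ∈ Finset.Icc 1 N,
                      lam ^ (Fin.snoc p a : Fin (k' + 1) → ℕ) (Fin.last k') •
                        entangledWord m (fun j => T j.succ) (fun j => A j.succ)
                          (fun j => (Fin.snoc p a : Fin (k' + 1) → ℕ) ((γ j).castSucc))
                          (A 0 x) := by
                  exact congrArg _ (sum_piFinset_snoc k' (Finset.Icc 1 N) _)
              _ = ((N : ℂ) ^ (k' + 1))⁻¹ •
                  ∑ p ∈ Fintype.piFinset (fun _ : Fin k' => Finset.Icc 1 N),
                    ∑ a ∈ Finset.Icc 1 N,
                      lam ^ a • entangledWord m (fun j => T j.succ) (fun j => A j.succ)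
                        (fun j => p (γ j)) (A 0 x) := by
                  exact congrArg _ (Finset.sum_congr rfl fun p _ =>
                    Finset.sum_congr rfl fun a _ => step2 p a)
              _ = ((N : ℂ) ^ (k' + 1))⁻¹ •
                  ((∑ a ∈ Finset.Icc 1 N, lam ^ a) •
                    ∑ p ∈ Fintype.piFinset (fun _ : Fin k' => Finset.Icc 1 N),
                      entangledWord m (fun j => T j.succ) (fun j => A j.succ)
                        (fun j => p (γ j)) (A 0 x)) := by
                  congr 1
                  rw [Finset.smul_sum]
                  exact Finset.sum_congr rfl fun p _ => Finset.sum_smul.symm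
              _ = ((N : ℂ)⁻¹ * ∑ a ∈ Finset.Icc 1 N, lam ^ a) •
                  (((N : ℂ) ^ k')⁻¹ •
                    ∑ p ∈ Fintype.piFinset (fun _ : Fin k' => Finset.Icc 1 N),
                      entangledWord m (fun j => T j.succ) (fun j => A j.succ)
                        (fun j => p (γ j)) (A 0 x)) := by
                  rw [smul_smul, smul_smul, pow_succ, mul_inv]
                  congr 1
                  ring
          simp only [key]
          exact hc.smul hy
      -- conclude by density
      intro x
      have hAP0 := hAP 0
      have h0 : ((0 : Fin (m + 1)).castSucc : Fin (m + 2)) = 0 := rfl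
      rw [h0] at hAP0
      have hxcl : x ∈ closure (G : Set X) := by
        have hsub : (Submodule.span ℂ {x : X | ∃ lam : ℂ, ‖lam‖ = 1 ∧ T 0 x = lam • x}) ≤ G :=
          Submodule.span_le.2 (fun z hz => heig z hz)
        have hx' : x ∈ (Submodule.span ℂ
            {x : X | ∃ lam : ℂ, ‖lam‖ = 1 ∧ T 0 x = lam • x}).topologicalClosure := by
          rw [hAP0.2]; trivial
        have := Submodule.topologicalClosure_mono hsub hx'
        rwa [← SetLike.mem_coe, Submodule.topologicalClosure_coe] at this
      have := converge_of_closure S D hSnorm (G : Set X)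
        (fun z hz => hz) x hxcl
      obtain ⟨y, hy⟩ := this
      exact ⟨y, by simpa only [hSapply] using hy⟩

/-- **Entangled ergodic theorem, almost periodic case.**
If `T₁, …, T_{m-1}` are almost periodic, `T_m` is power bounded and totally ergodic, and
`A₁, …, A_{m-1}` are arbitrary bounded operators, then the entangled Cesàro means
`(1/N^k) ∑_{n₁,…,n_k=1}^N T_m^{n_{α(m)}} A_{m-1} ⋯ A₁ T₁^{n_{α(1)}}` converge strongly.
(Here the paper's `m` is `m + 1`.) -/
theorem entangled_cesaro_converges_almostPeriodic
    [CompleteSpace X] (m k : ℕ) (hk : 0 < k) (hkm : k ≤ m + 1)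
    (α : Fin (m + 1) → Fin k) (hα : Function.Surjective α)
    (T : Fin (m + 1) → (X →L[ℂ] X)) (A : Fin m → (X →L[ℂ] X))
    (hAP : ∀ j : Fin m, AlmostPeriodic (T j.castSucc))
    (hPB : PowerBounded (T (Fin.last m)))
    (hTE : TotallyErgodic (T (Fin.last m))) :
    ∀ x : X, ∃ y : X,
      Tendsto
        (fun N : ℕ =>
          ((N : ℂ) ^ k)⁻¹ •
            ∑ n ∈ Fintype.piFinset (fun _ : Fin k => Finset.Icc 1 N),
              entangledWord m T A (fun j => n (α j)) x)
        atTop (nhds y) := by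
  exact main_aux m k hk hkm α hα T A hAP hPB hTE

end
end

section
/- Let X be a Banach space and let (T_n)_{n∈ℕ} and (S_n)_{n∈ℕ} be sequences of bounded linear operators on X such that for every x ∈ X both {T_n x : n ∈ ℕ} and {S_n x : n ∈ ℕ} are relatively norm compact in X. Then {T_n S_n x : n ∈ ℕ} is relatively norm compact in X for every x ∈ X. -/
open Filter Topology

/-- If `(T_n)` and `(S_n)` are sequences of bounded operators on a Banach space such that all
orbits `{T_n x}` and `{S_n x}` are relatively norm compact, then so are the orbits
`{T_n (S_n x)}`. -/
theorem relCompact_orbit_comp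
    {X : Type*} [NormedAddCommGroup X] [NormedSpace ℂ X] [CompleteSpace X]
    (T S : ℕ → (X →L[ℂ] X))
    (hT : ∀ x : X, IsCompact (closure (Set.range fun n : ℕ => T n x)))
    (hS : ∀ x : X, IsCompact (closure (Set.range fun n : ℕ => S n x))) :
    ∀ x : X, IsCompact (closure (Set.range fun n : ℕ => T n (S n x))) := by
  -- uniform bound on ‖T n‖ via Banach–Steinhaus
  obtain ⟨M, hM⟩ : ∃ M, ∀ n, ‖T n‖ ≤ M := by
    apply banach_steinhaus
    intro y
    obtain ⟨C, hC⟩ := ((hT y).isBounded).exists_norm_le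
    exact ⟨C, fun n => hC _ (subset_closure (Set.mem_range_self n))⟩
  have hM0 : 0 ≤ M := le_trans (norm_nonneg _) (hM 0)
  intro x
  rw [isCompact_iff_totallyBounded_isComplete]
  refine ⟨TotallyBounded.closure ?_, isClosed_closure.isComplete⟩
  rw [Metric.totallyBounded_iff]
  intro ε hε
  set δ : ℝ := ε / (2 * (M + 1)) with hδdef
  have hδ : 0 < δ := by positivity
  -- finite δ-net of K := closure (range (S · x))
  obtain ⟨t, htfin, htcov⟩ :=
    Metric.totallyBounded_iff.mp (hS x).totallyBounded δ hδ
  -- union of compact orbit closures over the net points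
  have hCcomp : IsCompact (⋃ y ∈ t, closure (Set.range fun n : ℕ => T n y)) :=
    htfin.isCompact_biUnion (fun y _ => hT y)
  obtain ⟨s, hsfin, hscov⟩ :=
    Metric.totallyBounded_iff.mp hCcomp.totallyBounded (ε / 2) (by positivity)
  refine ⟨s, hsfin, ?_⟩
  rintro _ ⟨n, rfl⟩
  have hSx : S n x ∈ ⋃ y ∈ t, Metric.ball y δ :=
    htcov (subset_closure (Set.mem_range_self n))
  simp only [Set.mem_iUnion] at hSx
  obtain ⟨y, hyt, hy⟩ := hSx
  have h1 : dist (T n (S n x)) (T n y) < ε / 2 := by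
    rw [dist_eq_norm, ← map_sub]
    calc ‖T n (S n x - y)‖ ≤ ‖T n‖ * ‖S n x - y‖ := (T n).le_opNorm _
      _ ≤ M * ‖S n x - y‖ := by
          exact mul_le_mul_of_nonneg_right (hM n) (norm_nonneg _)
      _ < (M + 1) * δ := by
          have hy' : ‖S n x - y‖ < δ := by rwa [Metric.mem_ball, dist_eq_norm] at hy
          nlinarith [norm_nonneg (S n x - y)]
      _ = ε / 2 := by
          have hM1 : M + 1 ≠ 0 := by positivity
          rw [hδdef]
          field_simp
  have h2 : T n y ∈ ⋃ z ∈ s, Metric.ball z (ε / 2) := by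
    apply hscov
    exact Set.mem_biUnion hyt (subset_closure (Set.mem_range_self n))
  simp only [Set.mem_iUnion] at h2 ⊢
  obtain ⟨z, hzs, hz⟩ := h2
  refine ⟨z, hzs, ?_⟩
  rw [Metric.mem_ball] at *
  calc dist (T n (S n x)) z ≤ dist (T n (S n x)) (T n y) + dist (T n y) z := dist_triangle _ _ _
    _ < ε / 2 + ε / 2 := add_lt_add h1 hz
    _ = ε := by ring
end
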